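/- Let n,m,p,q ∈ ℕ, A ∈ ℝ^{n×n}, B₁ ∈ ℝ^{n×m}, B₂ ∈ ℝ^{n×p}, C₁ ∈ ℝ^{q×n}, D₁ ∈ ℝ^{q×m}, D₂ ∈ ℝ^{q×p}, and γ > 0. Suppose P ∈ ℝ^{n×n} is symmetric positive definite and Z ∈ ℝ^{p×n} is such that the symmetric block matrix [[PAᵀ + AP + ZᵀB₂ᵀ + B₂Z, B₁, PC₁ᵀ + ZᵀD₂ᵀ], [B₁ᵀ, −γI_m, D₁ᵀ], [C₁P + D₂Z, D₁, −γI_q]] is negative semidefinite. Let K = Z P⁻¹. Then for every continuous w : [0,∞) → ℝ^m and every continuously differentiable x : [0,∞) → ℝⁿ with x(0) = 0 and x′(t) = (A + B₂K)x(t) + B₁w(t) for all t ≥ 0, the output y(t) := (C₁ + D₂K)x(t) + D₁w(t) satisfies ∫₀^∞ ‖y(t)‖² dt ≤ γ² ∫₀^∞ ‖w(t)‖² dt. -/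

import Mathlib

open MeasureTheory Matrix


theorem diss_aux {n m p q : ℕ}
    (A : Matrix (Fin n) (Fin n) ℝ) (B₁ : Matrix (Fin n) (Fin m) ℝ)
    (B₂ : Matrix (Fin n) (Fin p) ℝ) (C₁ : Matrix (Fin q) (Fin n) ℝ)
    (D₁ : Matrix (Fin q) (Fin m) ℝ) (D₂ : Matrix (Fin q) (Fin p) ℝ)
    (γ : ℝ) (hγ : 0 < γ)
    (P : Matrix (Fin n) (Fin n) ℝ) (Z : Matrix (Fin p) (Fin n) ℝ)
    (hP : P.PosDef)
    (hLMI : ∀ (z : Fin n → ℝ) (w : Fin m → ℝ) (v : Fin q → ℝ),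
      z ⬝ᵥ (P * Aᵀ + A * P + Zᵀ * B₂ᵀ + B₂ * Z).mulVec z
        + 2 * (z ⬝ᵥ B₁.mulVec w)
        + 2 * (z ⬝ᵥ (P * C₁ᵀ + Zᵀ * D₂ᵀ).mulVec v)
        - γ * (w ⬝ᵥ w)
        + 2 * (w ⬝ᵥ D₁ᵀ.mulVec v)
        - γ * (v ⬝ᵥ v) ≤ 0)
    (K : Matrix (Fin p) (Fin n) ℝ) (hK : K = Z * P⁻¹)
    (xv : Fin n → ℝ) (wv : Fin m → ℝ) :
    ∑ i, (((C₁ + D₂ * K) *ᵥ xv + D₁ *ᵥ wv) i) ^ 2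
      ≤ γ ^ 2 * (∑ i, (wv i) ^ 2)
        - γ * (2 * (xv ⬝ᵥ P⁻¹ *ᵥ ((A + B₂ * K) *ᵥ xv + B₁ *ᵥ wv))) := by
  have hdet : IsUnit P.det := hP.det_pos.ne'.isUnit
  have hQP : P⁻¹ * P = 1 := Matrix.nonsing_inv_mul P hdet
  have hPQ : P * P⁻¹ = 1 := Matrix.mul_nonsing_inv P hdet
  have hPs : Pᵀ = P := by
    have := hP.isHermitian.eq
    rwa [Matrix.conjTranspose_eq_transpose_of_trivial] at this
  have hQs : (P⁻¹)ᵀ = P⁻¹ := by rw [Matrix.transpose_nonsing_inv, hPs]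
  set Q := P⁻¹ with hQdef
  have tD : ∀ {k l : ℕ} (M : Matrix (Fin k) (Fin l) ℝ) (u : Fin l → ℝ) (v : Fin k → ℝ),
      u ⬝ᵥ (Mᵀ *ᵥ v) = (M *ᵥ u) ⬝ᵥ v := by
    intro k l M u v
    rw [dotProduct_comm (M *ᵥ u) v, Matrix.dotProduct_mulVec v M u, dotProduct_comm,
      Matrix.mulVec_transpose]
  have sQ : ∀ (a b : Fin n → ℝ), (Q *ᵥ a) ⬝ᵥ b = a ⬝ᵥ (Q *ᵥ b) := by
    intro a b
    conv_rhs => rw [← hQs]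
    rw [tD]
  set z := Q *ᵥ xv with hz
  set yv := (C₁ + D₂ * K) *ᵥ xv + D₁ *ᵥ wv with hyv
  set v := γ⁻¹ • yv with hv
  have hKQ : Z *ᵥ z = K *ᵥ xv := by
    rw [hz, Matrix.mulVec_mulVec, ← hK]
  have hPz : P *ᵥ z = xv := by
    rw [hz, Matrix.mulVec_mulVec, hPQ, Matrix.one_mulVec]
  have hzd : ∀ (u : Fin n → ℝ), z ⬝ᵥ u = xv ⬝ᵥ Q *ᵥ u := by
    intro u; rw [hz, sQ]
  have hzP : ∀ (u : Fin n → ℝ), z ⬝ᵥ P *ᵥ u = xv ⬝ᵥ u := by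
    intro u; rw [hz, sQ, Matrix.mulVec_mulVec, hQP, Matrix.one_mulVec]
  -- Term 1
  have h1a : z ⬝ᵥ (P * Aᵀ) *ᵥ z = xv ⬝ᵥ Q *ᵥ (A *ᵥ xv) := by
    conv_lhs => rw [← Matrix.mulVec_mulVec, hzP, tD, dotProduct_comm, hzd]
  have h1b : z ⬝ᵥ (A * P) *ᵥ z = xv ⬝ᵥ Q *ᵥ (A *ᵥ xv) := by
    conv_lhs => rw [← Matrix.mulVec_mulVec, hPz, hzd]
  have h1d : z ⬝ᵥ (B₂ * Z) *ᵥ z = xv ⬝ᵥ Q *ᵥ (B₂ *ᵥ (K *ᵥ xv)) := by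
    conv_lhs => rw [← Matrix.mulVec_mulVec, hKQ, hzd]
  have h1c : z ⬝ᵥ (Zᵀ * B₂ᵀ) *ᵥ z = xv ⬝ᵥ Q *ᵥ (B₂ *ᵥ (K *ᵥ xv)) := by
    conv_lhs => rw [← Matrix.transpose_mul, tD, dotProduct_comm]
    rw [h1d]
  have hT1 : z ⬝ᵥ (P * Aᵀ + A * P + Zᵀ * B₂ᵀ + B₂ * Z) *ᵥ z
      = 2 * (xv ⬝ᵥ Q *ᵥ ((A + B₂ * K) *ᵥ xv)) := by
    rw [Matrix.add_mulVec, Matrix.add_mulVec, Matrix.add_mulVec, dotProduct_add,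
      dotProduct_add, dotProduct_add, h1a, h1b, h1c, h1d, Matrix.add_mulVec,
      Matrix.mulVec_add, dotProduct_add, ← Matrix.mulVec_mulVec]
    ring
  -- Term 2
  have hT2 : z ⬝ᵥ B₁ *ᵥ wv = xv ⬝ᵥ Q *ᵥ (B₁ *ᵥ wv) := hzd _
  -- Term 3
  have hT3 : z ⬝ᵥ (P * C₁ᵀ + Zᵀ * D₂ᵀ) *ᵥ v = ((C₁ + D₂ * K) *ᵥ xv) ⬝ᵥ v := by
    have h3a : z ⬝ᵥ (P * C₁ᵀ) *ᵥ v = (C₁ *ᵥ xv) ⬝ᵥ v := by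
      conv_lhs => rw [← Matrix.mulVec_mulVec, hzP, tD]
    have h3b : z ⬝ᵥ (Zᵀ * D₂ᵀ) *ᵥ v = (D₂ *ᵥ (K *ᵥ xv)) ⬝ᵥ v := by
      conv_lhs => rw [← Matrix.transpose_mul, tD, ← Matrix.mulVec_mulVec, hKQ]
    rw [Matrix.add_mulVec, dotProduct_add, h3a, h3b, Matrix.add_mulVec, add_dotProduct,
      ← Matrix.mulVec_mulVec]
  -- Term 4
  have hT4 : wv ⬝ᵥ D₁ᵀ *ᵥ v = (D₁ *ᵥ wv) ⬝ᵥ v := tD D₁ wv v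
  have hmain := hLMI z wv v
  rw [hT1, hT2, hT3, hT4] at hmain
  set S : ℝ := yv ⬝ᵥ yv with hS
  have hyvS : ∑ i, (yv i) ^ 2 = S := by
    simp [hS, dotProduct, pow_two]
  have hWS : wv ⬝ᵥ wv = ∑ i, (wv i) ^ 2 := by
    simp [dotProduct, pow_two]
  have hyvv : yv ⬝ᵥ v = γ⁻¹ * S := by
    rw [hv, dotProduct_smul, hS]; simp
  have hvv : v ⬝ᵥ v = γ⁻¹ * (γ⁻¹ * S) := by
    rw [hv, smul_dotProduct, dotProduct_smul, hS]; simp [mul_assoc]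
  have hcomb : ((C₁ + D₂ * K) *ᵥ xv) ⬝ᵥ v + (D₁ *ᵥ wv) ⬝ᵥ v = yv ⬝ᵥ v := by
    rw [hyv, add_dotProduct]
  have hc : xv ⬝ᵥ Q *ᵥ ((A + B₂ * K) *ᵥ xv) + xv ⬝ᵥ Q *ᵥ (B₁ *ᵥ wv)
      = xv ⬝ᵥ Q *ᵥ ((A + B₂ * K) *ᵥ xv + B₁ *ᵥ wv) := by
    rw [Matrix.mulVec_add, dotProduct_add]
  set c : ℝ := xv ⬝ᵥ Q *ᵥ ((A + B₂ * K) *ᵥ xv + B₁ *ᵥ wv) with hcdef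
  set W : ℝ := ∑ i, (wv i) ^ 2 with hWdef
  rw [hWS, hvv] at hmain
  have e1 : 2 * (((C₁ + D₂ * K) *ᵥ xv) ⬝ᵥ v) + 2 * ((D₁ *ᵥ wv) ⬝ᵥ v) = 2 * (γ⁻¹ * S) := by
    rw [← hyvv, ← hcomb]; ring
  have e2 : γ * (γ⁻¹ * (γ⁻¹ * S)) = γ⁻¹ * S := by
    rw [← mul_assoc, mul_inv_cancel₀ hγ.ne', one_mul]
  have key : 2 * c + γ⁻¹ * S - γ * W ≤ 0 := by linarith [hmain, e1, e2, hc]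
  have key2 : γ * (2 * c) + S - γ ^ 2 * W ≤ 0 := by
    have h := mul_le_mul_of_nonneg_left key hγ.le
    have h2 : γ * (2 * c + γ⁻¹ * S - γ * W) = γ * (2 * c) + S - γ ^ 2 * W := by
      field_simp
    rw [h2, mul_zero] at h
    exact h
  rw [hyvS]
  linarith [key2]

/-- full-state feedback controller synthesis LMI, sufficiency.
If `P > 0` and `Z` satisfy the synthesis LMI (expressed through its quadratic form,
negative semidefiniteness of the 3×3 block matrix), then with `K = Z P⁻¹` every
closed-loop trajectory with zero initial condition satisfies the `L₂`-gain bound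
`∫‖y‖² ≤ γ² ∫‖w‖²`. -/
theorem hinf_synthesis_LMI_ODE
    {n m p q : ℕ}
    (A : Matrix (Fin n) (Fin n) ℝ) (B₁ : Matrix (Fin n) (Fin m) ℝ)
    (B₂ : Matrix (Fin n) (Fin p) ℝ) (C₁ : Matrix (Fin q) (Fin n) ℝ)
    (D₁ : Matrix (Fin q) (Fin m) ℝ) (D₂ : Matrix (Fin q) (Fin p) ℝ)
    (γ : ℝ) (hγ : 0 < γ)
    (P : Matrix (Fin n) (Fin n) ℝ) (Z : Matrix (Fin p) (Fin n) ℝ)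
    (hP : P.PosDef)
    -- negative semidefiniteness of the block matrix
    -- [[PAᵀ+AP+ZᵀB₂ᵀ+B₂Z, B₁, PC₁ᵀ+ZᵀD₂ᵀ],[B₁ᵀ,−γI,D₁ᵀ],[C₁P+D₂Z,D₁,−γI]],
    -- expressed as: zᵀNz ≤ 0 for all vectors z = (z, w, v):
    (hLMI : ∀ (z : Fin n → ℝ) (w : Fin m → ℝ) (v : Fin q → ℝ),
      z ⬝ᵥ (P * Aᵀ + A * P + Zᵀ * B₂ᵀ + B₂ * Z).mulVec z
        + 2 * (z ⬝ᵥ B₁.mulVec w)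
        + 2 * (z ⬝ᵥ (P * C₁ᵀ + Zᵀ * D₂ᵀ).mulVec v)
        - γ * (w ⬝ᵥ w)
        + 2 * (w ⬝ᵥ D₁ᵀ.mulVec v)
        - γ * (v ⬝ᵥ v) ≤ 0)
    -- the feedback gain
    (K : Matrix (Fin p) (Fin n) ℝ) (hK : K = Z * P⁻¹)
    -- trajectory data
    (w : ℝ → Fin m → ℝ) (hw : ContinuousOn w (Set.Ici (0:ℝ)))
    (x : ℝ → Fin n → ℝ) (hx0 : x 0 = 0)
    (hode : ∀ t : ℝ, 0 ≤ t →
      HasDerivAt x ((A + B₂ * K).mulVec (x t) + B₁.mulVec (w t)) t)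
    (y : ℝ → Fin q → ℝ)
    (hy : ∀ t : ℝ, 0 ≤ t → y t = (C₁ + D₂ * K).mulVec (x t) + D₁.mulVec (w t)) :
    ∫⁻ t in Set.Ioi (0:ℝ), ENNReal.ofReal (∑ i, (y t i) ^ 2)
      ≤ ENNReal.ofReal (γ ^ 2) * ∫⁻ t in Set.Ioi (0:ℝ), ENNReal.ofReal (∑ i, (w t i) ^ 2) := by
  classical
  -- diss_aux is assumed available (proved above)
  -- basic matrix facts
  have hdet : IsUnit P.det := hP.det_pos.ne'.isUnit
  have hPs : Pᵀ = P := by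
    have := hP.isHermitian.eq
    rwa [Matrix.conjTranspose_eq_transpose_of_trivial] at this
  have hQs : (P⁻¹)ᵀ = P⁻¹ := by rw [Matrix.transpose_nonsing_inv, hPs]
  have tD : ∀ {k l : ℕ} (M : Matrix (Fin k) (Fin l) ℝ) (u : Fin l → ℝ) (v : Fin k → ℝ),
      u ⬝ᵥ (Mᵀ *ᵥ v) = (M *ᵥ u) ⬝ᵥ v := by
    intro k l M u v
    rw [dotProduct_comm (M *ᵥ u) v, Matrix.dotProduct_mulVec v M u, dotProduct_comm,
      Matrix.mulVec_transpose]
  have sQ : ∀ (a b : Fin n → ℝ), (P⁻¹ *ᵥ a) ⬝ᵥ b = a ⬝ᵥ (P⁻¹ *ᵥ b) := by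
    intro a b
    conv_rhs => rw [← hQs]
    rw [tD]
  -- functions
  set g : ℝ → Fin q → ℝ := fun t => (C₁ + D₂ * K) *ᵥ x t + D₁ *ᵥ w t with hgdef
  set G : ℝ → ℝ := fun t => ∑ i, (g t i) ^ 2 with hGdef
  set W : ℝ → ℝ := fun t => ∑ i, (w t i) ^ 2 with hWdef
  set Vd : ℝ → ℝ := fun t => 2 * (x t ⬝ᵥ P⁻¹ *ᵥ ((A + B₂ * K) *ᵥ x t + B₁ *ᵥ w t)) with hVddef
  set V : ℝ → ℝ := fun t => x t ⬝ᵥ P⁻¹ *ᵥ x t with hVdef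
  -- continuity
  have hxc : ContinuousOn x (Set.Ici (0:ℝ)) :=
    fun t ht => (hode t ht).continuousAt.continuousWithinAt
  have hmv : ∀ {k l : ℕ} (M : Matrix (Fin k) (Fin l) ℝ), Continuous (fun v : Fin l → ℝ => M *ᵥ v) :=
    fun M => continuous_const.matrix_mulVec continuous_id
  have hgc : ContinuousOn g (Set.Ici (0:ℝ)) :=
    (((hmv (C₁ + D₂ * K)).comp_continuousOn hxc).add ((hmv D₁).comp_continuousOn hw))
  have hGc : ContinuousOn G (Set.Ici (0:ℝ)) := by
    apply continuousOn_finset_sum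
    intro i _
    exact ((continuous_apply i).comp_continuousOn hgc).pow 2
  have hWc : ContinuousOn W (Set.Ici (0:ℝ)) := by
    apply continuousOn_finset_sum
    intro i _
    exact ((continuous_apply i).comp_continuousOn hw).pow 2
  have hVdc : ContinuousOn Vd (Set.Ici (0:ℝ)) := by
    have hu : ContinuousOn (fun t => P⁻¹ *ᵥ ((A + B₂ * K) *ᵥ x t + B₁ *ᵥ w t)) (Set.Ici (0:ℝ)) :=
      (hmv P⁻¹).comp_continuousOn
        (((hmv (A + B₂ * K)).comp_continuousOn hxc).add ((hmv B₁).comp_continuousOn hw))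
    have hdot : ContinuousOn
        (fun t => x t ⬝ᵥ P⁻¹ *ᵥ ((A + B₂ * K) *ᵥ x t + B₁ *ᵥ w t)) (Set.Ici (0:ℝ)) := by
      apply continuousOn_finset_sum
      intro i _
      exact ((continuous_apply i).comp_continuousOn hxc).mul
        ((continuous_apply i).comp_continuousOn hu)
    exact continuousOn_const.mul hdot
  -- derivative of V
  have hVd : ∀ t, 0 ≤ t → HasDerivAt V (Vd t) t := by
    intro t ht
    set xd : Fin n → ℝ := (A + B₂ * K) *ᵥ x t + B₁ *ᵥ w t with hxd
    have hxi : ∀ i, HasDerivAt (fun s => x s i) (xd i) t := hasDerivAt_pi.mp (hode t ht)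
    have dexp : ∀ (a b : Fin n → ℝ), a ⬝ᵥ P⁻¹ *ᵥ b = ∑ i, ∑ j, P⁻¹ i j * (a i * b j) := by
      intro a b
      simp only [dotProduct, Matrix.mulVec, Finset.mul_sum]
      exact Finset.sum_congr rfl fun i _ => Finset.sum_congr rfl fun j _ => by ring
    have hVeq : V = fun s => ∑ i, ∑ j, P⁻¹ i j * (x s i * x s j) := by
      funext s; rw [hVdef]; exact dexp (x s) (x s)
    have hder : HasDerivAt (fun s => ∑ i, ∑ j, P⁻¹ i j * (x s i * x s j))
        (∑ i, ∑ j, P⁻¹ i j * (xd i * x t j + x t i * xd j)) t := by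
      apply HasDerivAt.fun_sum; intro i _
      apply HasDerivAt.fun_sum; intro j _
      exact ((hxi i).mul (hxi j)).const_mul _
    rw [hVeq]
    convert hder using 1
    have e1 : (∑ i, ∑ j, P⁻¹ i j * (xd i * x t j + x t i * xd j))
        = xd ⬝ᵥ P⁻¹ *ᵥ x t + x t ⬝ᵥ P⁻¹ *ᵥ xd := by
      rw [dexp, dexp, ← Finset.sum_add_distrib]
      exact Finset.sum_congr rfl fun i _ => by
        rw [← Finset.sum_add_distrib]
        exact Finset.sum_congr rfl fun j _ => by ring
    have e2 : xd ⬝ᵥ P⁻¹ *ᵥ x t = x t ⬝ᵥ P⁻¹ *ᵥ xd := by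
      rw [← sQ, dotProduct_comm]
    rw [e1, e2, hVddef]; ring
  -- pointwise dissipation
  have hdiss : ∀ t, 0 ≤ t → G t ≤ γ ^ 2 * W t - γ * Vd t := by
    intro t ht
    exact diss_aux A B₁ B₂ C₁ D₁ D₂ γ hγ P Z hP hLMI K hK (x t) (w t)
  -- finite-horizon bound
  have hfin : ∀ T : ℝ, 0 ≤ T →
      ∫⁻ t in Set.Ioc (0:ℝ) T, ENNReal.ofReal (G t)
        ≤ ENNReal.ofReal (γ ^ 2) * ∫⁻ t in Set.Ioi (0:ℝ), ENNReal.ofReal (W t) := by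
    intro T hT
    have hsub : Set.Icc (0:ℝ) T ⊆ Set.Ici (0:ℝ) := Set.Icc_subset_Ici_self
    have hGi : IntegrableOn G (Set.Ioc 0 T) volume :=
      ((hGc.mono hsub).integrableOn_Icc).mono_set Set.Ioc_subset_Icc_self
    have hWi : IntegrableOn W (Set.Ioc 0 T) volume :=
      ((hWc.mono hsub).integrableOn_Icc).mono_set Set.Ioc_subset_Icc_self
    have hVdi : IntegrableOn Vd (Set.Ioc 0 T) volume :=
      ((hVdc.mono hsub).integrableOn_Icc).mono_set Set.Ioc_subset_Icc_self
    have hVdint : IntervalIntegrable Vd volume 0 T := by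
      rw [intervalIntegrable_iff_integrableOn_Ioc_of_le hT]
      exact hVdi
    have hFTC : ∫ t in (0:ℝ)..T, Vd t = V T - V 0 := by
      apply intervalIntegral.integral_eq_sub_of_hasDerivAt _ hVdint
      intro t ht
      rw [Set.uIcc_of_le hT] at ht
      exact hVd t ht.1
    have hV0 : V 0 = 0 := by simp [hVdef, hx0]
    have hVT : 0 ≤ V T := by
      have := (hP.inv.posSemidef).re_dotProduct_nonneg (x T)
      simpa [hVdef] using this
    have hVdnn : 0 ≤ ∫ t in Set.Ioc (0:ℝ) T, Vd t := by
      rw [← intervalIntegral.integral_of_le hT, hFTC, hV0]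
      linarith
    have hWnn : 0 ≤ ∫ t in Set.Ioc (0:ℝ) T, W t := by
      apply setIntegral_nonneg measurableSet_Ioc
      intro t _; positivity
    have hIneq : ∫ t in Set.Ioc (0:ℝ) T, G t ≤ γ ^ 2 * ∫ t in Set.Ioc (0:ℝ) T, W t := by
      have h1 : ∫ t in Set.Ioc (0:ℝ) T, G t
          ≤ ∫ t in Set.Ioc (0:ℝ) T, (γ ^ 2 * W t - γ * Vd t) := by
        apply setIntegral_mono_on hGi ((hWi.const_mul _).sub (hVdi.const_mul _))
          measurableSet_Ioc
        intro t ht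
        exact hdiss t ht.1.le
      have h2 : ∫ t in Set.Ioc (0:ℝ) T, (γ ^ 2 * W t - γ * Vd t)
          = γ ^ 2 * (∫ t in Set.Ioc (0:ℝ) T, W t) - γ * ∫ t in Set.Ioc (0:ℝ) T, Vd t := by
        rw [integral_sub (hWi.const_mul _) (hVdi.const_mul _), integral_const_mul,
          integral_const_mul]
      nlinarith [mul_nonneg hγ.le hVdnn]
    have l1 : ∫⁻ t in Set.Ioc (0:ℝ) T, ENNReal.ofReal (G t)
        = ENNReal.ofReal (∫ t in Set.Ioc (0:ℝ) T, G t) := by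
      rw [ofReal_integral_eq_lintegral_ofReal hGi]
      exact ae_of_all _ fun t => by positivity
    have l2 : ∫⁻ t in Set.Ioc (0:ℝ) T, ENNReal.ofReal (W t)
        = ENNReal.ofReal (∫ t in Set.Ioc (0:ℝ) T, W t) := by
      rw [ofReal_integral_eq_lintegral_ofReal hWi]
      exact ae_of_all _ fun t => by positivity
    calc ∫⁻ t in Set.Ioc (0:ℝ) T, ENNReal.ofReal (G t)
        = ENNReal.ofReal (∫ t in Set.Ioc (0:ℝ) T, G t) := l1
      _ ≤ ENNReal.ofReal (γ ^ 2 * ∫ t in Set.Ioc (0:ℝ) T, W t) := ENNReal.ofReal_le_ofReal hIneq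
      _ = ENNReal.ofReal (γ ^ 2) * ENNReal.ofReal (∫ t in Set.Ioc (0:ℝ) T, W t) :=
          ENNReal.ofReal_mul (by positivity)
      _ = ENNReal.ofReal (γ ^ 2) * ∫⁻ t in Set.Ioc (0:ℝ) T, ENNReal.ofReal (W t) := by rw [l2]
      _ ≤ ENNReal.ofReal (γ ^ 2) * ∫⁻ t in Set.Ioi (0:ℝ), ENNReal.ofReal (W t) := by
          exact mul_le_mul_right (lintegral_mono_set Set.Ioc_subset_Ioi_self) _
  -- replace y by g
  have hyg : ∫⁻ t in Set.Ioi (0:ℝ), ENNReal.ofReal (∑ i, (y t i) ^ 2)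
      = ∫⁻ t in Set.Ioi (0:ℝ), ENNReal.ofReal (G t) := by
    apply setLIntegral_congr_fun measurableSet_Ioi
    intro t ht
    beta_reduce
    rw [hy t ht.le]
  rw [hyg]
  -- monotone limit
  have hGm : AEMeasurable (fun t => ENNReal.ofReal (G t)) (volume.restrict (Set.Ioi (0:ℝ))) :=
    ENNReal.measurable_ofReal.comp_aemeasurable
      ((hGc.mono Set.Ioi_subset_Ici_self).aemeasurable measurableSet_Ioi)
  set f : ℕ → ℝ → ENNReal :=
    fun N t => (Set.Ioc (0:ℝ) (N:ℝ)).indicator (fun s => ENNReal.ofReal (G s)) t with hfdef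
  have hfm : ∀ N, AEMeasurable (f N) (volume.restrict (Set.Ioi (0:ℝ))) :=
    fun N => hGm.indicator measurableSet_Ioc
  have hmono : ∀ t, Monotone fun N => f N t := by
    intro t N M hNM
    exact Set.indicator_le_indicator_of_subset
      (Set.Ioc_subset_Ioc_right (Nat.cast_le.2 hNM)) (fun _ => zero_le) t
  have hsup : ∀ t ∈ Set.Ioi (0:ℝ), (⨆ N, f N t) = ENNReal.ofReal (G t) := by
    intro t ht
    apply le_antisymm
    · exact iSup_le fun N => Set.indicator_le_self _ _ t
    · obtain ⟨N, hN⟩ := exists_nat_ge t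
      exact le_iSup_of_le N
        (le_of_eq (Set.indicator_of_mem (Set.mem_Ioc.mpr ⟨ht, hN⟩) (fun s => ENNReal.ofReal (G s))).symm)
  calc ∫⁻ t in Set.Ioi (0:ℝ), ENNReal.ofReal (G t)
      = ∫⁻ t in Set.Ioi (0:ℝ), ⨆ N, f N t := by
        exact (setLIntegral_congr_fun measurableSet_Ioi hsup).symm
    _ = ⨆ N, ∫⁻ t in Set.Ioi (0:ℝ), f N t :=
        lintegral_iSup' hfm (ae_of_all _ hmono)
    _ ≤ ENNReal.ofReal (γ ^ 2) * ∫⁻ t in Set.Ioi (0:ℝ), ENNReal.ofReal (W t) := by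
        apply iSup_le
        intro N
        have : ∫⁻ t in Set.Ioi (0:ℝ), f N t
            = ∫⁻ t in Set.Ioc (0:ℝ) (N:ℝ), ENNReal.ofReal (G t) := by
          simp only [hfdef]
          rw [lintegral_indicator measurableSet_Ioc,
            Measure.restrict_restrict measurableSet_Ioc,
            Set.inter_eq_self_of_subset_left Set.Ioc_subset_Ioi_self]
        rw [this]
        exact hfin (N:ℝ) (Nat.cast_nonneg N)
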